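/- arXiv:1410.8543 — 13 statements merged into one kernel-verified Lean document; each statement's English description precedes it below -/
import Mathlib

section
/- An action can be expressed using set intersection if and only if it is idempotent and commutative. That is, for an action f : C × S → C, there exists a set X and injections identifying elements of C and S with subsets of X such that cs = c ∩ s, if and only if css = cs and cs₁s₂ = cs₂s₁ for all c ∈ C and s, s₁, s₂ ∈ S. -/
lemma aux_comm {C S : Type} (f : C → S → C)
    (h2 : ∀ (c : C) (s₁ s₂ : S), f (f c s₁) s₂ = f (f c s₂) s₁)
    (l : List S) : ∀ (c : C) (s : S),
    List.foldl f (f c s) l = f (List.foldl f c l) s := by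
  induction l with
  | nil => intro c s; rfl
  | cons a l ih =>
    intro c s
    simp only [List.foldl_cons]
    rw [h2, ih]

lemma aux_idem {C S : Type} (f : C → S → C)
    (h1 : ∀ (c : C) (s : S), f (f c s) s = f c s)
    (h2 : ∀ (c : C) (s₁ s₂ : S), f (f c s₁) s₂ = f (f c s₂) s₁)
    (l : List S) (c : C) (s : S) :
    f (List.foldl f (f c s) l) s = List.foldl f (f c s) l := by
  rw [aux_comm f h2 l c s, h1]

lemma aux_double {C S : Type} (f : C → S → C)
    (h1 : ∀ (c : C) (s : S), f (f c s) s = f c s)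
    (h2 : ∀ (c : C) (s₁ s₂ : S), f (f c s₁) s₂ = f (f c s₂) s₁)
    (l : List S) : ∀ (l' : List S) (c : C),
    List.foldl f (List.foldl f c (l ++ l')) l = List.foldl f c (l ++ l') := by
  induction l with
  | nil => intro l' c; rfl
  | cons a l ih =>
    intro l' c
    have h : List.foldl f c ((a :: l) ++ l') = List.foldl f (f c a) (l ++ l') := by
      simp
    rw [h, List.foldl_cons, aux_idem f h1 h2 (l ++ l') c a, ih]

/-- An action `f : C → S → C` can be expressed using set intersection iff it is
idempotent and commutative (Rothschild–Yalcin). -/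
theorem stmt_0 {C S : Type} (f : C → S → C) :
    (∃ (X : Type) (O : C → Set X) (F : S → Set X),
      Function.Injective O ∧ Function.Injective F ∧
      ∀ (c : C) (s : S), O (f c s) = O c ∩ F s) ↔
    ((∀ (c : C) (s : S), f (f c s) s = f c s) ∧
     (∀ (c : C) (s₁ s₂ : S), f (f c s₁) s₂ = f (f c s₂) s₁)) := by
  constructor
  · rintro ⟨X, O, F, hO, hF, hOF⟩
    constructor
    · intro c s
      apply hO
      rw [hOF, hOF, Set.inter_assoc, Set.inter_self]
    · intro c s₁ s₂
      apply hO
      rw [hOF, hOF, hOF, hOF, Set.inter_assoc, Set.inter_assoc,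
        Set.inter_comm (F s₁) (F s₂)]
  · rintro ⟨h1, h2⟩
    refine ⟨C ⊕ S,
      fun c => {x | ∃ l : List S, x = Sum.inl (List.foldl f c l)},
      fun s => {x | (∃ c', x = Sum.inl c' ∧ f c' s = c') ∨ x = Sum.inr s},
      ?_, ?_, ?_⟩
    · intro c₁ c₂ h
      simp only [Set.ext_iff, Set.mem_setOf_eq] at h
      obtain ⟨T, hT⟩ := (h (Sum.inl c₂)).mpr ⟨[], rfl⟩
      obtain ⟨T', hT'⟩ := (h (Sum.inl c₁)).mp ⟨[], rfl⟩
      simp only [Sum.inl.injEq] at hT hT'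
      have e1 : List.foldl f c₁ (T ++ T') = c₁ := by
        rw [List.foldl_append, ← hT, hT']
      have e2 : c₂ = List.foldl f c₁ (T ++ T') := by
        conv_lhs => rw [hT, ← e1]
        exact aux_double f h1 h2 T T' c₁
      rw [e2, e1]
    · intro s₁ s₂ h
      simp only [Set.ext_iff, Set.mem_setOf_eq] at h
      rcases (h (Sum.inr s₁)).mp (Or.inr rfl) with ⟨c', hc', _⟩ | h'
      · exact absurd hc' (by simp)
      · exact (Sum.inr.injEq s₁ s₂).mp h'
    · intro c s
      ext x
      simp only [Set.mem_setOf_eq, Set.mem_inter_iff]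
      constructor
      · rintro ⟨l, rfl⟩
        refine ⟨⟨l ++ [s], ?_⟩, Or.inl ⟨_, rfl, aux_idem f h1 h2 l c s⟩⟩
        rw [List.foldl_append]
        simp [aux_comm f h2 l c s]
      · rintro ⟨⟨l, rfl⟩, hx⟩
        rcases hx with ⟨c', hc', hfix⟩ | h'
        · simp only [Sum.inl.injEq] at hc'
          refine ⟨l, ?_⟩
          rw [aux_comm f h2 l c s, hc', hfix]
        · exact absurd h' (by simp)
end

section
/- If an action is idempotent and commutative, then for any c, d ∈ C and any word w ∈ S*, if dw = c then every element of the orbit of c is fixed by each letter of w; in particular cw = c. -/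
private lemma foldl_swap {C S : Type*} (f : C → S → C)
    (comm : ∀ (c : C) (s₁ s₂ : S), f (f c s₁) s₂ = f (f c s₂) s₁) :
    ∀ (w : List S) (c : C) (s : S), w.foldl f (f c s) = f (w.foldl f c) s := by
  intro w
  induction w with
  | nil => intro c s; rfl
  | cons a t ih =>
    intro c s
    simp only [List.foldl_cons]
    rw [comm, ih]

private lemma mem_fix {C S : Type*} (f : C → S → C)
    (idem : ∀ (c : C) (s : S), f (f c s) s = f c s)
    (comm : ∀ (c : C) (s₁ s₂ : S), f (f c s₁) s₂ = f (f c s₂) s₁) :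
    ∀ (w : List S) (d : C) (s : S), s ∈ w → f (w.foldl f d) s = w.foldl f d := by
  intro w
  induction w with
  | nil => intro d s hs; cases hs
  | cons a t ih =>
    intro d s hs
    simp only [List.foldl_cons]
    rcases List.mem_cons.mp hs with h | h
    · subst h
      rw [foldl_swap f comm, idem]
    · exact ih (f d a) s h

/-- In an idempotent commutative action, if `dw = c` then every element of the
orbit of `c` is fixed by each letter of `w`; in particular `cw = c`. -/
theorem stmt_1 {C S : Type*} (f : C → S → C)
    (idem : ∀ (c : C) (s : S), f (f c s) s = f c s)
    (comm : ∀ (c : C) (s₁ s₂ : S), f (f c s₁) s₂ = f (f c s₂) s₁)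
    (c d : C) (w : List S) (h : w.foldl f d = c) :
    (∀ (v : List S) (s : S), s ∈ w → f (v.foldl f c) s = v.foldl f c) ∧
      w.foldl f c = c := by
  have hfix : ∀ s ∈ w, f c s = c := by
    intro s hs; rw [← h]; exact mem_fix f idem comm w d s hs
  constructor
  · intro v s hs
    rw [← foldl_swap f comm, hfix s hs]
  · clear h
    induction w with
    | nil => rfl
    | cons a t ih =>
      simp only [List.foldl_cons]
      rw [hfix a List.mem_cons_self]
      exact ih (fun s hs => hfix s (List.mem_cons_of_mem a hs))
end

section
/- In an idempotent commutative action, the orbit map O : C → P(C ⊎ S) defined by O(c) = {cw | w ∈ S*} is injective: if O(c) = O(d) then c = d. -/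
private lemma swap_lem {C S : Type*} (f : C → S → C)
    (comm : ∀ (c : C) (s₁ s₂ : S), f (f c s₁) s₂ = f (f c s₂) s₁) :
    ∀ (u : List S) (c : C) (s : S),
      f (List.foldl f c u) s = List.foldl f (f c s) u := by
  intro u
  induction u with
  | nil => intro c s; rfl
  | cons a u ih =>
    intro c s
    simp only [List.foldl_cons]
    rw [ih (f c a) s, comm]

private lemma comm_words {C S : Type*} (f : C → S → C)
    (comm : ∀ (c : C) (s₁ s₂ : S), f (f c s₁) s₂ = f (f c s₂) s₁) :
    ∀ (u v : List S) (c : C),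
      List.foldl f (List.foldl f c u) v = List.foldl f (List.foldl f c v) u := by
  intro u
  induction u with
  | nil => intro v c; rfl
  | cons a u ih =>
    intro v c
    simp only [List.foldl_cons]
    rw [ih v (f c a), swap_lem f comm v c a]

private lemma idem_word {C S : Type*} (f : C → S → C)
    (idem : ∀ (c : C) (s : S), f (f c s) s = f c s)
    (comm : ∀ (c : C) (s₁ s₂ : S), f (f c s₁) s₂ = f (f c s₂) s₁) :
    ∀ (u : List S) (c : C),
      List.foldl f (List.foldl f c u) u = List.foldl f c u := by
  intro u
  induction u with
  | nil => intro c; rfl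
  | cons a u ih =>
    intro c
    simp only [List.foldl_cons]
    rw [swap_lem f comm u (f c a) a, idem c a, ih]

/-- In an idempotent commutative action, the orbit map is injective. -/
theorem stmt_2 {C S : Type*} (f : C → S → C)
    (idem : ∀ (c : C) (s : S), f (f c s) s = f c s)
    (comm : ∀ (c : C) (s₁ s₂ : S), f (f c s₁) s₂ = f (f c s₂) s₁) :
    Function.Injective (fun c : C => {x : C | ∃ w : List S, w.foldl f c = x}) := by
  intro c d h
  simp only [Set.ext_iff, Set.mem_setOf_eq] at h
  obtain ⟨w, hw⟩ := (h d).mpr ⟨[], rfl⟩      -- c·w = d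
  obtain ⟨v, hv⟩ := (h c).mp ⟨[], rfl⟩       -- d·v = c
  -- c = d·v = c·w·v, so c = c·(w then v)
  have hc : List.foldl f (List.foldl f c w) v = c := by rw [hw, hv]
  -- d = c·w = (c·w·v)·w = c·w·(v·w) = c·w·(w·v) = (c·w·w)·v = c·w·v = c
  symm
  calc d = List.foldl f c w := hw.symm
    _ = List.foldl f (List.foldl f (List.foldl f c w) v) w := by rw [hc]
    _ = List.foldl f (List.foldl f (List.foldl f c w) w) v :=
        comm_words f comm v w (List.foldl f c w)
    _ = List.foldl f (List.foldl f c w) v := by rw [idem_word f idem comm w c]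
    _ = c := hc
end

section
/- Any action which is idempotent and previous redundant is fully previous redundant: for all c ∈ C, s ∈ S, and words w ∈ S*, csws = cws. -/
/-- Any idempotent, previous redundant action is fully previous redundant:
`csws = cws` for every word `w`. -/
theorem stmt_3 {C S : Type*} (f : C → S → C)
    (idem : ∀ (c : C) (s : S), f (f c s) s = f c s)
    (pr : ∀ (c : C) (s t : S), f (f (f c s) t) s = f (f c t) s)
    (c : C) (s : S) (w : List S) :
    f (w.foldl f (f c s)) s = f (w.foldl f c) s := by
  induction w generalizing c with
  | nil => exact idem c s
  | cons t w ih =>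
    simp only [List.foldl_cons]
    rw [← ih (f (f c s) t), pr, ih (f c t)]
end

section
/- Let F be an operation from sets to algebras turning disjoint unions into products and bijections into isomorphisms, let K be the class of subalgebras of algebras F(X), and let 1 be a one-element set. Then every algebra A ∈ K embeds into a product of copies of F(1) indexed by the set of homomorphisms from A to F(1), via the map sending a to (φ(a))_{φ ∈ Hom(A, F(1))}. -/
open FirstOrder

/-- The product structure on a Pi type, for an algebraic language
(one with no relation symbols): operations act componentwise. -/
noncomputable instance piStructure (L : Language) [L.IsAlgebraic] {I : Type*}
    (M : I → Type*) [∀ i, L.Structure (M i)] : L.Structure (∀ i, M i) where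
  funMap f x i := Language.Structure.funMap f (fun j => x j i)
  RelMap r _ := isEmptyElim r

/-- Projection from a product structure to a factor is a homomorphism. -/
def projHom (L : Language) [L.IsAlgebraic] {I : Type*}
    (M : I → Type*) [∀ i, L.Structure (M i)] (i : I) :
    (∀ j, M j) →[L] M i where
  toFun p := p i
  map_fun' _ _ := rfl
  map_rel' r _ := isEmptyElim r

/-- If `F` turns disjoint unions into products and bijections into
isomorphisms, then every algebra embeddable into some `F(X)` embeds into the
product of copies of `F(1)` indexed by `Hom(A, F(1))`, via `a ↦ (φ(a))_φ`. -/
theorem stmt_6 (L : Language) [L.IsAlgebraic] (F : Type u → Type v)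
    [St : ∀ X, L.Structure (F X)]
    (hbij : ∀ {X Y : Type u}, X ≃ Y → Nonempty (F X ≃[L] F Y))
    (hdisj : ∀ {I : Type u} (X : I → Type u),
      Nonempty (F (Σ i, X i) ≃[L] (∀ i, F (X i))))
    (A : Type w) [L.Structure A] (hA : ∃ X : Type u, Nonempty (A ↪[L] F X)) :
    ∃ e : A ↪[L] (∀ _ : A →[L] F PUnit, F PUnit),
      ∀ (a : A) (φ : A →[L] F PUnit), e a φ = φ a := by
  obtain ⟨X, ⟨j⟩⟩ := hA
  obtain ⟨g⟩ := hbij (X := X) (Y := Σ _ : X, PUnit)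
    ⟨fun x => ⟨x, PUnit.unit⟩, Sigma.fst, fun _ => rfl, fun _ => rfl⟩
  obtain ⟨h⟩ := hdisj (I := X) (fun _ => PUnit)
  -- homomorphism A → ∏ x : X, F PUnit
  let J : A →[L] (∀ _ : X, F PUnit) :=
    (h.toHom.comp g.toHom).comp j.toHom
  have hJinj : Function.Injective J := by
    intro a b hab
    exact j.injective (g.injective (h.injective hab))
  refine ⟨⟨⟨fun a φ => φ a, ?_⟩, ?_, ?_⟩, fun a φ => rfl⟩
  · intro a b hab
    apply hJinj
    funext x
    exact congrFun hab ((projHom L (fun _ : X => F PUnit) x).comp J)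
  · intro n f x
    funext φ
    exact φ.map_fun f x
  · intro n r
    exact isEmptyElim r
end

section
/- Every equation between terms of sort C that holds universally in all full ↑↓-actions follows from idempotence (css = cs) and previous redundance (csts = cts). Concretely: if cs₁⋯sₙ = dt₁⋯tₘ (with c, d variables of sort C and sᵢ, tⱼ variables of sort S) holds in the action F(1), then c and d are the same variable, and after deleting all but the last occurrence of each repeated S-variable on each side, the two sides become identical words. -/
/-- The `S`-sort of the action `F(1)`: the identity `(1,0)`, the constant
`false` operation `(0,0)` and the constant `true` operation `(1,1)`. -/
def SF1 : Type := {g : Bool → Bool // g = id ∨ g = (fun _ => false) ∨ g = (fun _ => true)}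

/-- The action map of `F(1)`. -/
def actF1 (c : Bool) (s : SF1) : Bool := s.1 c

def idS : SF1 := ⟨id, Or.inl rfl⟩
def cfS : SF1 := ⟨fun _ => false, Or.inr (Or.inl rfl)⟩
def ctS : SF1 := ⟨fun _ => true, Or.inr (Or.inr rfl)⟩

@[simp] lemma act_id (b : Bool) : actF1 b idS = b := rfl
@[simp] lemma act_cf (b : Bool) : actF1 b cfS = false := rfl
@[simp] lemma act_ct (b : Bool) : actF1 b ctS = true := rfl

lemma act_idem (b : Bool) (s : SF1) : actF1 (actF1 b s) s = actF1 b s := by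
  rcases s with ⟨g, hg | hg | hg⟩ <;> subst hg <;> rfl

/-- If the variable `a` occurs in `l`, prepending an extra action by `σ a`
does not change the fold. -/
lemma fold_mem {VS : Type*} (σ : VS → SF1) :
    ∀ (l : List VS) (a : VS) (b : Bool), a ∈ l →
    (l.map σ).foldl actF1 (actF1 b (σ a)) = (l.map σ).foldl actF1 b := by
  intro l
  induction l with
  | nil => intro a b ha; simp at ha
  | cons s t ih =>
    intro a b ha
    simp only [List.map_cons, List.foldl_cons]
    rcases List.mem_cons.mp ha with rfl | ha
    · rw [act_idem]
    · rcases (σ s).2 with hg | hg | hg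
      · have h1 : actF1 (actF1 b (σ a)) (σ s) = actF1 (actF1 b (σ s)) (σ a) := by
          show (σ s).1 _ = (σ a).1 ((σ s).1 b)
          rw [hg]; rfl
        rw [h1]; exact ih a _ ha
      · have h1 : actF1 (actF1 b (σ a)) (σ s) = actF1 b (σ s) := by
          show (σ s).1 _ = (σ s).1 b
          rw [hg]
        rw [h1]
      · have h1 : actF1 (actF1 b (σ a)) (σ s) = actF1 b (σ s) := by
          show (σ s).1 _ = (σ s).1 b
          rw [hg]
        rw [h1]

/-- Folding over a word is the same as folding over its dedup. -/
lemma fold_dedup {VS : Type*} [DecidableEq VS] (σ : VS → SF1) :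
    ∀ (l : List VS) (b : Bool),
    (l.map σ).foldl actF1 b = (l.dedup.map σ).foldl actF1 b := by
  intro l
  induction l with
  | nil => intro b; rfl
  | cons a t ih =>
    intro b
    by_cases ha : a ∈ t
    · rw [List.dedup_cons_of_mem ha]
      simp only [List.map_cons, List.foldl_cons]
      rw [fold_mem σ t a b ha, ih b]
    · rw [List.dedup_cons_of_notMem ha]
      simp only [List.map_cons, List.foldl_cons]
      exact ih _

lemma fold_congr {VS : Type*} {σ σ' : VS → SF1} :
    ∀ (l : List VS), (∀ s ∈ l, σ s = σ' s) →
    ∀ b, (l.map σ).foldl actF1 b = (l.map σ').foldl actF1 b := by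
  intro l hl b
  rw [List.map_congr_left hl]

/-- Two nodup words with the same semantics are equal. -/
lemma nodup_eq {VS : Type*} [DecidableEq VS] :
    ∀ (w v : List VS), w.Nodup → v.Nodup →
    (∀ (b : Bool) (σ : VS → SF1),
      (w.map σ).foldl actF1 b = (v.map σ).foldl actF1 b) → w = v := by
  intro w
  induction w using List.reverseRecOn with
  | nil =>
    intro v _ _ hsem
    induction v using List.reverseRecOn with
    | nil => rfl
    | append_singleton v' y _ =>
      exfalso
      have := hsem false (fun _ => ctS)
      simp [List.foldl_append] at this
  | append_singleton w' x ih =>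
    intro v hw hv hsem
    induction v using List.reverseRecOn with
    | nil =>
      exfalso
      have := hsem false (fun _ => ctS)
      simp [List.foldl_append] at this
    | append_singleton v' y _ =>
      have hxy : x = y := by
        by_contra hne
        have := hsem false (fun z => if z = x then ctS else cfS)
        simp [List.foldl_append, hne, Ne.symm hne] at this
      subst hxy
      have hw' : w'.Nodup := (List.nodup_append.mp hw).1
      have hv' : v'.Nodup := (List.nodup_append.mp hv).1
      have hxw : x ∉ w' := by
        intro hx
        have := (List.nodup_append'.mp hw).2.2
        exact this hx (List.mem_singleton_self x)
      have hxv : x ∉ v' := by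
        intro hx
        have := (List.nodup_append'.mp hv).2.2
        exact this hx (List.mem_singleton_self x)
      have key : ∀ (b : Bool) (σ : VS → SF1),
          (w'.map σ).foldl actF1 b = (v'.map σ).foldl actF1 b := by
        intro b σ
        set σ'' : VS → SF1 := Function.update σ x idS with hσ''
        have e1 : (w'.map σ).foldl actF1 b = (w'.map σ'').foldl actF1 b :=
          fold_congr w' (fun s hs => by
            rw [hσ'', Function.update_of_ne (fun hsx => hxw (by rwa [hsx] at hs))]) b
        have e2 : (v'.map σ).foldl actF1 b = (v'.map σ'').foldl actF1 b :=
          fold_congr v' (fun s hs => by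
            rw [hσ'', Function.update_of_ne (fun hsx => hxv (by rwa [hsx] at hs))]) b
        have e3 := hsem b σ''
        simp only [List.map_append, List.foldl_append, List.map_cons,
          List.map_nil, List.foldl_cons, List.foldl_nil] at e3
        have hx'' : σ'' x = idS := Function.update_self x idS σ
        rw [hx''] at e3
        simp only [act_id] at e3
        rw [e1, e2]; exact e3
      rw [ih v' hw' hv' key]

/-- The equational theory of ↑↓-actions is axiomatized by idempotence and
previous redundance.  Concretely: if the equation `c s₁ ⋯ sₙ = d t₁ ⋯ tₘ`
(with variables `c, d` of sort `C` and words `w, v` of `S`-variables) holds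
in `F(1)` under every assignment, then `c` and `d` are the same variable and
after deleting all but the last occurrence of each repeated `S`-variable the
two words become identical (so the equation follows from (I) and (PR)). -/
theorem stmt_11 {VC VS : Type*} [DecidableEq VS] (c d : VC) (w v : List VS)
    (h : ∀ (γ : VC → Bool) (σ : VS → SF1),
      (w.map σ).foldl actF1 (γ c) = (v.map σ).foldl actF1 (γ d)) :
    c = d ∧ w.dedup = v.dedup := by
  classical
  have hid : ∀ (l : List VS) (b : Bool),
      (l.map (fun _ => idS)).foldl actF1 b = b := by
    intro l
    induction l with
    | nil => intro b; rfl
    | cons a t iht => intro b; simpa using iht b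
  have hcd : c = d := by
    by_contra hne
    have := h (fun z => if z = c then true else false) (fun _ => idS)
    rw [hid, hid] at this
    simp [Ne.symm hne] at this
  refine ⟨hcd, ?_⟩
  apply nodup_eq _ _ (List.nodup_dedup w) (List.nodup_dedup v)
  intro b σ
  rw [← fold_dedup, ← fold_dedup]
  have := h (fun _ => b) σ
  simpa [hcd] using this
end

section
/- There exists a finite action which is idempotent and fully previous redundant but which has a nontrivial strong link, and hence satisfies the equational theory of ↑↓-actions without being an ↑↓-action. Specifically, let C = {c,d,e}, S = {s,t}, with cs = ds = c, ct = dt = d, es = et = e. This action satisfies css' = cs' whenever s' = s'' and auwu = awu for all a ∈ C, u ∈ S, w ∈ S*, yet c and d are strongly linked with c ≠ d. -/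
/-- The example action: `C = {c,d,e} = Fin 3` (`c = 0`, `d = 1`, `e = 2`),
`S = {s,t} = Bool` (`s = false`, `t = true`), with `cs = ds = c`,
`ct = dt = d`, `es = et = e`. -/
def exAct (a : Fin 3) (u : Bool) : Fin 3 :=
  if a = 2 then 2 else if u then 1 else 0

lemma exAct_two_iff (a : Fin 3) (u : Bool) : exAct a u = 2 ↔ a = 2 := by
  unfold exAct; split
  · simp_all
  · constructor
    · intro h; cases u <;> simp_all
    · intro h; simp_all

lemma foldl_two_iff (w : List Bool) (a : Fin 3) :
    w.foldl exAct a = 2 ↔ a = 2 := by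
  induction w generalizing a with
  | nil => rfl
  | cons u w ih => simp [List.foldl_cons, ih, exAct_two_iff]

lemma exAct_congr {a b : Fin 3} (u : Bool) (h : a = 2 ↔ b = 2) :
    exAct a u = exAct b u := by
  unfold exAct
  by_cases ha : a = 2 <;> simp [ha, h.symm.trans, (h.trans Iff.rfl)] <;> simp_all

/-- There is a finite action which is idempotent and fully previous redundant
(hence satisfies the equational theory of ↑↓-actions) but has a nontrivial
strong link, so it is not an ↑↓-action. -/
theorem stmt_12 :
    (∀ (a : Fin 3) (u : Bool), exAct (exAct a u) u = exAct a u) ∧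
    (∀ (a : Fin 3) (u : Bool) (w : List Bool),
      exAct (w.foldl exAct (exAct a u)) u = exAct (w.foldl exAct a) u) ∧
    (∃ (n : ℕ) (a : Fin (n + 1) → Fin 3) (w : Fin n → List Bool),
      a 0 = 0 ∧ a (Fin.last n) = 1 ∧
      (∀ i : Fin n, (w i).foldl exAct (a i.castSucc) = a i.castSucc ∧
        (w i).foldl exAct (a i.succ) = a i.succ ∧
        (w i).foldl exAct 0 = (w i).foldl exAct 1)) ∧
    (0 : Fin 3) ≠ 1 := by
  refine ⟨by decide, ?_, ⟨2, ![0, 2, 1], ![[false], [true]], by decide, by decide, by decide⟩, by decide⟩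
  intro a u w
  apply exAct_congr
  rw [foldl_two_iff, foldl_two_iff, exAct_two_iff]
end

section
/- If (C, S) is an idempotent and previous redundant action in which all strong links are trivial, then the induced action (C, S*) of the word monoid S* on C is also idempotent, previous redundant, and has all strong links trivial. -/
/-- All strong links in the action `f : C → S → C` are trivial. -/
def AllStrongLinksTrivial {C S : Type*} (f : C → S → C) : Prop :=
  ∀ (c d : C) (n : ℕ) (a : Fin (n + 1) → C) (w : Fin n → List S),
    a 0 = c → a (Fin.last n) = d →
    (∀ i : Fin n, (w i).foldl f (a i.castSucc) = a i.castSucc ∧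
      (w i).foldl f (a i.succ) = a i.succ ∧
      (w i).foldl f c = (w i).foldl f d) →
    c = d



private lemma lemB {C S : Type*} (f : C → S → C)
    (idem : ∀ (c : C) (s : S), f (f c s) s = f c s)
    (pr : ∀ (c : C) (s t : S), f (f (f c s) t) s = f (f c t) s) :
    ∀ (x : List S) (c : C) (s : S),
      (x ++ [s]).foldl f (f c s) = (x ++ [s]).foldl f c := by
  intro x
  induction x with
  | nil => intro c s; simp [idem]
  | cons t x' ih =>
    intro c s
    have h1 : (x' ++ [s]).foldl f (f (f (f c s) t) s) =
        (x' ++ [s]).foldl f (f (f c s) t) := ih _ s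
    have h2 : (x' ++ [s]).foldl f (f (f c t) s) =
        (x' ++ [s]).foldl f (f c t) := ih _ s
    simp only [List.cons_append, List.foldl_cons]
    rw [← h1, pr, h2]

private lemma lemM {C S : Type*} (f : C → S → C)
    (idem : ∀ (c : C) (s : S), f (f c s) s = f c s)
    (pr : ∀ (c : C) (s t : S), f (f (f c s) t) s = f (f c t) s) :
    ∀ (w x : List S) (c : C),
      (w ++ x ++ w).foldl f c = (x ++ w).foldl f c := by
  intro w
  induction w with
  | nil => simp
  | cons s w' ih =>
    intro x c
    have key : (x ++ [s]).foldl f (f c s) = (x ++ [s]).foldl f c :=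
      lemB f idem pr x c s
    calc ((s :: w') ++ x ++ (s :: w')).foldl f c
        = (w' ++ (x ++ [s]) ++ w').foldl f (f c s) := by
          simp [List.foldl_append]
      _ = ((x ++ [s]) ++ w').foldl f (f c s) := ih _ _
      _ = w'.foldl f ((x ++ [s]).foldl f (f c s)) := by rw [List.foldl_append]
      _ = w'.foldl f ((x ++ [s]).foldl f c) := by rw [key]
      _ = (x ++ (s :: w')).foldl f c := by simp [List.foldl_append]


/-- If `(C, S)` is idempotent, previous redundant and all its strong links are
trivial, then the same holds for the induced action `(C, S*)` of the word
monoid on `C`. -/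
theorem stmt_13 {C S : Type*} (f : C → S → C)
    (idem : ∀ (c : C) (s : S), f (f c s) s = f c s)
    (pr : ∀ (c : C) (s t : S), f (f (f c s) t) s = f (f c t) s)
    (hsl : AllStrongLinksTrivial f) :
    (∀ (c : C) (w : List S),
      w.foldl f (w.foldl f c) = w.foldl f c) ∧
    (∀ (c : C) (w x : List S),
      w.foldl f (x.foldl f (w.foldl f c)) = w.foldl f (x.foldl f c)) ∧
    AllStrongLinksTrivial (fun (c : C) (w : List S) => w.foldl f c) := by
  refine ⟨?_, ?_, ?_⟩
  · intro c w
    have := lemM f idem pr w [] c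
    simpa [List.foldl_append] using this
  · intro c w x
    have := lemM f idem pr w x c
    simpa [List.foldl_append] using this
  · intro c d n a w h0 hl hi
    have hjoin : ∀ (l : List (List S)) (c : C),
        l.foldl (fun c w => w.foldl f c) c = l.flatten.foldl f c := by
      intro l
      induction l with
      | nil => simp
      | cons u l' ih => intro c; simp [List.foldl_append, ih]
    refine hsl c d n a (fun i => (w i).flatten) h0 hl ?_
    intro i
    obtain ⟨h1, h2, h3⟩ := hi i
    exact ⟨by rw [← hjoin]; exact h1, by rw [← hjoin]; exact h2,
      by rw [← hjoin, ← hjoin]; exact h3⟩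
end

section
/- Let (C, S) be an idempotent and fully previous redundant action. Define c ∼ d if there exists s ∈ S which is not an identity operation with cs = c and ds = d, and let ≈ be the reflexive-transitive closure of ∼. Then ≈ is a congruence: c ≈ d implies cs ≈ ds for all s ∈ S. -/
/-- `c ∼ d` iff some `s ∈ S` which is not an identity operation fixes both
`c` and `d`. -/
def simRel {C S : Type*} (f : C → S → C) (c d : C) : Prop :=
  ∃ s : S, (¬ ∀ x : C, f x s = x) ∧ f c s = c ∧ f d s = d

/-- For an idempotent, fully previous redundant action, the reflexive-transitive
closure `≈` of `∼` is a congruence: `c ≈ d` implies `cs ≈ ds`. -/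
theorem stmt_14 {C S : Type*} (f : C → S → C)
    (idem : ∀ (c : C) (s : S), f (f c s) s = f c s)
    (fpr : ∀ (c : C) (s : S) (w : List S),
      f (w.foldl f (f c s)) s = f (w.foldl f c) s)
    (c d : C) (s : S) (h : Relation.ReflTransGen (simRel f) c d) :
    Relation.ReflTransGen (simRel f) (f c s) (f d s) := by
  by_cases hid : ∀ x : C, f x s = x
  · rw [hid c, hid d]; exact h
  · exact Relation.ReflTransGen.single ⟨s, hid, idem c s, idem d s⟩
end

section
/- In the quotient of an idempotent, fully previous redundant action (C, S) by the congruence ≈ (generated by c ∼ d when some non-identity s ∈ S fixes both c and d), every element s ∈ S acts on C/≈ as either an identity operation or a constant operation. -/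
/-- In the quotient of an idempotent, fully previous redundant action by the
congruence `≈` (the reflexive-transitive closure of `∼`), every `s ∈ S` acts
as an identity operation or as a constant operation. -/
theorem stmt_15 {C S : Type*} (f : C → S → C)
    (idem : ∀ (c : C) (s : S), f (f c s) s = f c s)
    (fpr : ∀ (c : C) (s : S) (w : List S),
      f (w.foldl f (f c s)) s = f (w.foldl f c) s) :
    ∀ s : S, (∀ c : C, Relation.ReflTransGen (simRel f) (f c s) c) ∨
      (∃ d : C, ∀ c : C, Relation.ReflTransGen (simRel f) (f c s) d) := by
  intro s
  by_cases h : ∀ x : C, f x s = x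
  · left; intro c; rw [h c]
  · right
    push_neg at h
    obtain ⟨x, hx⟩ := h
    refine ⟨f x s, fun c => Relation.ReflTransGen.single ?_⟩
    exact ⟨s, fun hall => hx (hall x), idem c s, idem x s⟩
end

section
/- Every ↑↓'-action is an ↑↓-action and vice versa: the algebras embeddable into some F'(X) (where S' consists of arbitrary pairs (s↓, s↑) of subsets of X acting by c ↦ (c ∩ s↓) ∪ s↑) coincide up to isomorphism with the algebras embeddable into some F(X) (where additionally s↑ ⊆ s↓ is required). In particular, F'(1) embeds into F(1 ⊎ {x}) for a one-element set 1 and a dummy element x. -/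
/-- The `S`-sort of the full ↑↓-action on `X`. -/
def FullS (X : Type*) : Type _ := {p : Set X × Set X // p.2 ⊆ p.1}

/-- The action map of the full ↑↓-action `F(X)`. -/
def fullAct {X : Type*} (c : Set X) (s : FullS X) : Set X := (c ∩ s.1.1) ∪ s.1.2

/-- The action map of the full ↑↓'-action `F'(X)`, where arbitrary pairs of
subsets are allowed. -/
def fullAct' {X : Type*} (c : Set X) (s : Set X × Set X) : Set X := (c ∩ s.1) ∪ s.2

/-- `(C, S, f)` embeds into `(C', S', f')` as a two-sorted action. -/
def ActEmbeds {C S C' S' : Type*} (f : C → S → C) (f' : C' → S' → C') : Prop :=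
  ∃ (iC : C → C') (iS : S → S'), Function.Injective iC ∧ Function.Injective iS ∧
    ∀ (c : C) (s : S), iC (f c s) = f' (iC c) (iS s)

theorem ActEmbeds.trans {C S C' S' C'' S'' : Type*} {f : C → S → C} {g : C' → S' → C'}
    {h : C'' → S'' → C''} (h1 : ActEmbeds f g) (h2 : ActEmbeds g h) : ActEmbeds f h := by
  obtain ⟨iC, iS, hiC, hiS, heq⟩ := h1
  obtain ⟨jC, jS, hjC, hjS, heq'⟩ := h2
  exact ⟨jC ∘ iC, jS ∘ iS, hjC.comp hiC, hjS.comp hiS,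
    fun c s => by simp [heq, heq']⟩

theorem full_embeds_full' (X : Type*) : ActEmbeds (fullAct (X := X)) (fullAct' (X := X)) :=
  ⟨id, Subtype.val, fun _ _ h => h, Subtype.val_injective, fun _ _ => rfl⟩

theorem full'_embeds_full (X : Type*) :
    ActEmbeds (fullAct' (X := X)) (fullAct (X := X ⊕ X)) := by
  refine ⟨fun c => Set.range Sum.inl ∪ Sum.inr '' c,
    fun p => ⟨(Set.range Sum.inl ∪ Sum.inr '' (p.1 ∪ p.2), Sum.inl '' p.1 ∪ Sum.inr '' p.2),
      ?_⟩, ?_, ?_, ?_⟩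
  · rintro z (⟨x, hx, rfl⟩ | ⟨x, hx, rfl⟩)
    · exact Or.inl ⟨x, rfl⟩
    · exact Or.inr ⟨x, Or.inr hx, rfl⟩
  · intro c c' h
    ext x
    have := Set.ext_iff.mp h (Sum.inr x)
    simpa using this
  · intro p q h
    have h2 := congrArg (fun s => (Subtype.val s).2) h
    simp only at h2
    have ha : p.1 = q.1 := by
      ext x
      have := Set.ext_iff.mp h2 (Sum.inl x)
      simpa using this
    have hb : p.2 = q.2 := by
      ext x
      have := Set.ext_iff.mp h2 (Sum.inr x)
      simpa using this
    exact Prod.ext ha hb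
  · intro c s
    simp only [fullAct, fullAct']
    ext z
    rcases z with x | x
    · simp
    · constructor
      · rintro (⟨y, h⟩ | ⟨y, hy, h⟩)
        · exact absurd h (by simp)
        · cases Sum.inr_injective h
          rcases hy with (⟨hxc, hx1⟩ | hx2)
          · exact Or.inl ⟨Or.inr ⟨x, hxc, rfl⟩, Or.inr ⟨x, Or.inl hx1, rfl⟩⟩
          · exact Or.inr (Or.inr ⟨x, hx2, rfl⟩)
      · rintro (⟨hc, hd⟩ | hu)
        · rcases hc with (⟨y, hy⟩ | ⟨y, hy, hyy⟩)
          · exact absurd hy (by simp)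
          · cases Sum.inr_injective hyy
            rcases hd with (⟨y', hy'⟩ | ⟨y', hy', hyy'⟩)
            · exact absurd hy' (by simp)
            · cases Sum.inr_injective hyy'
              rcases hy' with (h1 | h1)
              · exact Or.inr ⟨x, Or.inl ⟨hy, h1⟩, rfl⟩
              · exact Or.inr ⟨x, Or.inr h1, rfl⟩
        · rcases hu with (⟨y, hy, hyy⟩ | ⟨y, hy, hyy⟩)
          · exact absurd hyy (by simp)
          · cases Sum.inr_injective hyy
            exact Or.inr ⟨x, Or.inr hy, rfl⟩


theorem full_equiv_embeds {X : Type*} {Y : Type*} (e : X ≃ Y) :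
    ActEmbeds (fullAct (X := X)) (fullAct (X := Y)) := by
  have himg : Function.Injective (Set.image e : Set X → Set Y) :=
    Set.image_injective.mpr e.injective
  refine ⟨Set.image e, fun p => ⟨(e '' p.1.1, e '' p.1.2), Set.image_mono p.2⟩,
    himg, ?_, ?_⟩
  · intro p q h
    have h1 := congrArg (fun s => (Subtype.val s).1) h
    have h2 := congrArg (fun s => (Subtype.val s).2) h
    simp only at h1 h2
    exact Subtype.ext (Prod.ext (himg h1) (himg h2))
  · intro c s
    simp only [fullAct, Set.image_union, Set.image_inter e.injective]

/-- Every ↑↓'-action is an ↑↓-action and vice versa; in particular `F'(1)`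
embeds into `F(1 ⊎ {x})`. -/
theorem stmt_16 {C S : Type u} (f : C → S → C) :
    ((∃ X : Type u, ActEmbeds f (fullAct' (X := X))) ↔
      (∃ X : Type u, ActEmbeds f (fullAct (X := X)))) ∧
    ActEmbeds (fullAct' (X := PUnit)) (fullAct (X := PUnit ⊕ PUnit)) := by
  refine ⟨⟨?_, ?_⟩, (full'_embeds_full _).trans (full_equiv_embeds (Equiv.sumCongr Equiv.punitEquivPUnit Equiv.punitEquivPUnit))⟩
  · rintro ⟨X, hX⟩
    exact ⟨X ⊕ X, hX.trans (full'_embeds_full X)⟩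
  · rintro ⟨X, hX⟩
    exact ⟨X, hX.trans (full_embeds_full' X)⟩
end

section
/- Let B = (C, S↓, S↑) be a biaction satisfying idempotence, previous redundance, commutativity within S↓ and within S↑, and the basic and extra subset axioms, and let t ∈ S↓ ∪ S↑. Then the biaction B_t with C_t = {ct | c ∈ C}, the same sorts S↓ and S↑, and action c ∗ s = cst, also satisfies all of these axioms. -/
universe u v w

/-- A biaction: `S↓` and `S↑` each act on `C`. -/
structure Biaction where
  C : Type u
  Sd : Type v
  Su : Type w
  fd : C → Sd → C
  fu : C → Su → C

/-- The combined action of `S↓ ∪ S↑` on `C`. -/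
def Biaction.act (B : Biaction) (c : B.C) (x : B.Sd ⊕ B.Su) : B.C :=
  Sum.elim (B.fd c) (B.fu c) x

/-- The action of a word over `S↓ ∪ S↑` on `C`. -/
def Biaction.actW (B : Biaction) (c : B.C) (w : List (B.Sd ⊕ B.Su)) : B.C :=
  w.foldl B.act c

/-- Idempotence, previous redundance, commutativity within `S↓` and within
`S↑`, and the basic and extra subset axioms. -/
def Biaction.SatisfiesAxioms (B : Biaction) : Prop :=
  (∀ c s, B.fd (B.fd c s) s = B.fd c s) ∧
  (∀ c t, B.fu (B.fu c t) t = B.fu c t) ∧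
  (∀ c s t, B.fd (B.fu (B.fd c s) t) s = B.fd (B.fu c t) s) ∧
  (∀ c s t, B.fu (B.fd (B.fu c t) s) t = B.fu (B.fd c s) t) ∧
  (∀ c s u, B.fd (B.fd c s) u = B.fd (B.fd c u) s) ∧
  (∀ c t v, B.fu (B.fu c t) v = B.fu (B.fu c v) t) ∧
  (∀ c d e s t, B.fd c s = B.fd d s → B.fu c t = B.fu d t →
    B.fd e s = B.fu e t → c = d) ∧
  (∀ c d e s t (w : List (B.Sd ⊕ B.Su)),
    B.actW (B.fd c s) w = B.actW (B.fd d s) w →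
    B.actW (B.fu c t) w = B.actW (B.fu d t) w →
    B.actW (B.fd e s) w = B.actW (B.fu e t) w →
    B.actW c w = B.actW d w)

/-- The biaction `B_t`: carrier `C_t = {ct | c ∈ C}`, same sorts `S↓`, `S↑`,
and action `c ∗ s = cst`. -/
def Biaction.restrict (B : Biaction) (t : B.Sd ⊕ B.Su) : Biaction where
  C := {c : B.C // ∃ c₀ : B.C, B.act c₀ t = c}
  Sd := B.Sd
  Su := B.Su
  fd c s := ⟨B.act (B.fd c.1 s) t, _, rfl⟩
  fu c u := ⟨B.act (B.fu c.1 u) t, _, rfl⟩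

/-- Interleaving a word with the fixed letter `t`. -/
def Biaction.inter (B : Biaction) (t : B.Sd ⊕ B.Su)
    (w : List (B.Sd ⊕ B.Su)) : List (B.Sd ⊕ B.Su) :=
  w.flatMap (fun a => [a, t])

lemma Biaction.actW_restrict (B : Biaction) (t : B.Sd ⊕ B.Su)
    (w : List (B.Sd ⊕ B.Su)) :
    ∀ c : (B.restrict t).C,
      ((B.restrict t).actW c w).1 = B.actW c.1 (B.inter t w) := by
  induction w with
  | nil => intro c; rfl
  | cons a w ih =>
    intro c
    have h1 : (B.restrict t).actW c (a :: w) =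
        (B.restrict t).actW ((B.restrict t).act c a) w := rfl
    have h2 : ((B.restrict t).act c a).1 = B.act (B.act c.1 a) t := by
      cases a <;> rfl
    show ((B.restrict t).actW ((B.restrict t).act c a) w).1 = _
    rw [ih]
    have h3 : B.inter t (a :: w) = a :: t :: B.inter t w := rfl
    rw [h3]
    have h4 : B.actW c.1 (a :: t :: B.inter t w) =
        B.actW (B.act (B.act c.1 a) t) (B.inter t w) := rfl
    rw [h4, h2]

/-- If a biaction satisfies idempotence, previous redundance, commutativity
within each sort, and the basic and extra subset axioms, then so does `B_t`
for any `t ∈ S↓ ∪ S↑`. -/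
theorem stmt_18 (B : Biaction) (hB : B.SatisfiesAxioms) (t : B.Sd ⊕ B.Su) :
    (B.restrict t).SatisfiesAxioms := by
  obtain ⟨h1, h2, h3, h4, h5, h6, h7, h8⟩ := hB
  -- idempotence of the combined action
  have idem : ∀ c a, B.act (B.act c a) a = B.act c a := by
    rintro c (a | a)
    · exact h1 c a
    · exact h2 c a
  -- the key normalization rule: c·a·b·a = c·b·a
  have aba : ∀ (c : B.C) a b,
      B.act (B.act (B.act c a) b) a = B.act (B.act c b) a := by
    rintro c (a | a) (b | b)
    · show B.fd (B.fd (B.fd c a) b) a = B.fd (B.fd c b) a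
      rw [h5 (B.fd c a) b a, h1, h5]
    · exact h3 c a b
    · exact h4 c b a
    · show B.fu (B.fu (B.fu c a) b) a = B.fu (B.fu c b) a
      rw [h6 (B.fu c a) b a, h2, h6]
  -- elements of the restricted carrier are fixed by t
  have fixt : ∀ c : (B.restrict t).C, B.act c.1 t = c.1 := by
    rintro ⟨c, c₀, rfl⟩
    exact idem c₀ t
  have fd1 : ∀ (c : (B.restrict t).C) s,
      ((B.restrict t).fd c s).1 = B.act (B.act c.1 (Sum.inl s)) t := fun _ _ => rfl
  have fu1 : ∀ (c : (B.restrict t).C) u,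
      ((B.restrict t).fu c u).1 = B.act (B.act c.1 (Sum.inr u)) t := fun _ _ => rfl
  refine ⟨?_, ?_, ?_, ?_, ?_, ?_, ?_, ?_⟩
  · intro c s
    apply Subtype.ext
    simp only [fd1]
    rw [aba c.1 (Sum.inl s) t, aba c.1 t (Sum.inl s)]
  · intro c u
    apply Subtype.ext
    simp only [fu1]
    rw [aba c.1 (Sum.inr u) t, aba c.1 t (Sum.inr u)]
  · intro c s r
    apply Subtype.ext
    simp only [fd1, fu1, aba]
  · intro c s r
    apply Subtype.ext
    simp only [fd1, fu1, aba]
  · intro c s u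
    apply Subtype.ext
    simp only [fd1, aba]
    exact congrArg (fun x => B.act x t) (h5 c.1 s u)
  · intro c r v
    apply Subtype.ext
    simp only [fu1, aba]
    exact congrArg (fun x => B.act x t) (h6 c.1 r v)
  · -- basic subset axiom
    intro c d e s r hs hr he
    apply Subtype.ext
    have hs' : B.actW (B.fd c.1 s) [t] = B.actW (B.fd d.1 s) [t] :=
      congrArg Subtype.val hs
    have hr' : B.actW (B.fu c.1 r) [t] = B.actW (B.fu d.1 r) [t] :=
      congrArg Subtype.val hr
    have he' : B.actW (B.fd e.1 s) [t] = B.actW (B.fu e.1 r) [t] :=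
      congrArg Subtype.val he
    have := h8 c.1 d.1 e.1 s r [t] hs' hr' he'
    have hc : B.actW c.1 [t] = B.act c.1 t := rfl
    rw [show B.actW c.1 [t] = c.1 from fixt c,
        show B.actW d.1 [t] = d.1 from fixt d] at this
    exact this
  · -- extra subset axioms
    intro c d e s r w hs hr he
    apply Subtype.ext
    have hs' : B.actW (B.fd c.1 s) (t :: B.inter t w) =
        B.actW (B.fd d.1 s) (t :: B.inter t w) := by
      have := congrArg Subtype.val hs
      rwa [B.actW_restrict t w, B.actW_restrict t w] at this
    have hr' : B.actW (B.fu c.1 r) (t :: B.inter t w) =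
        B.actW (B.fu d.1 r) (t :: B.inter t w) := by
      have := congrArg Subtype.val hr
      rwa [B.actW_restrict t w, B.actW_restrict t w] at this
    have he' : B.actW (B.fd e.1 s) (t :: B.inter t w) =
        B.actW (B.fu e.1 r) (t :: B.inter t w) := by
      have := congrArg Subtype.val he
      rwa [B.actW_restrict t w, B.actW_restrict t w] at this
    have key := h8 c.1 d.1 e.1 s r (t :: B.inter t w) hs' hr' he'
    have kc : B.actW c.1 (t :: B.inter t w) =
        B.actW c.1 (B.inter t w) := by
      show B.actW (B.act c.1 t) (B.inter t w) = _
      rw [fixt c]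
    have kd : B.actW d.1 (t :: B.inter t w) =
        B.actW d.1 (B.inter t w) := by
      show B.actW (B.act d.1 t) (B.inter t w) = _
      rw [fixt d]
    rw [kc, kd] at key
    rw [B.actW_restrict t w, B.actW_restrict t w]
    exact key
end

section
/- There exists a 6-element biaction (C = {c,d,e,f,1,2}, S↓ = {s}, S↑ = {t,u}) satisfying idempotence, previous redundance, commutativity in S↓ and S↑, and the basic subset axiom, whose associated one-sorted action has a nontrivial strong link between c and d (witnessed by the words su and st), and hence is not an ↑↓-action. Specifically: cs = e, ct = f, cu = c, ds = e, dt = d, du = f, es = e, et = d, eu = c, fs = e, ft = f, fu = f, 1s = 2, 1t = 1, 1u = 1, 2s = 2, 2t = 1, 2u = 1. -/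
set_option maxHeartbeats 1000000


/-- The `C`-sort elements are `c = 0`, `d = 1`, `e = 2`, `f = 3`, `1 = 4`,
`2 = 5`.  `S↓ = {s} = Unit`.  The action of `s`:
`cs = ds = es = fs = e`, `1s = 2s = 2`. -/
def exFd (a : Fin 6) (_ : Unit) : Fin 6 := ![2, 2, 2, 2, 5, 5] a

/-- `S↑ = {t, u} = Bool` with `t = false`, `u = true`.  The action:
`ct = f, dt = d, et = d, ft = f, 1t = 1, 2t = 1` and
`cu = c, du = f, eu = c, fu = f, 1u = 1, 2u = 1`. -/
def exFu (a : Fin 6) (b : Bool) : Fin 6 :=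
  if b then ![0, 3, 0, 3, 4, 4] a else ![3, 1, 1, 3, 4, 4] a

/-- The associated one-sorted action on `S = S↓ ⊕ S↑`. -/
def exA (a : Fin 6) (x : Unit ⊕ Bool) : Fin 6 := Sum.elim (exFd a) (exFu a) x

lemma chase {X : Type} (A B A' B' C D M : Set X)
    (h1 : C ∩ A ∪ B = C) (h2 : M ∩ A ∪ B = M) (h3 : C ∩ A ∪ B = D ∩ A ∪ B)
    (h4 : M ∩ A' ∪ B' = M) (h5 : D ∩ A' ∪ B' = D) (h6 : C ∩ A' ∪ B' = D ∩ A' ∪ B') :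
    C = D := by
  ext x
  have e1 := Set.ext_iff.mp h1 x
  have e2 := Set.ext_iff.mp h2 x
  have e3 := Set.ext_iff.mp h3 x
  have e4 := Set.ext_iff.mp h4 x
  have e5 := Set.ext_iff.mp h5 x
  have e6 := Set.ext_iff.mp h6 x
  simp only [Set.mem_union, Set.mem_inter_iff] at e1 e2 e3 e4 e5 e6
  itauto

lemma fullAct_comp {X : Type} (p q : FullS X) (y : Set X) :
    fullAct (fullAct y p) q = y ∩ (p.1.1 ∩ q.1.1) ∪ (p.1.2 ∩ q.1.1 ∪ q.1.2) := by
  unfold fullAct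
  ext x
  simp only [Set.mem_union, Set.mem_inter_iff]
  tauto

/-- There is a 6-element biaction satisfying idempotence, previous redundance,
commutativity within each sort and the basic subset axiom, whose associated
action has a nontrivial strong link between `c` and `d` (witnessed by the
words `su` and `st`), and hence is not an ↑↓-action. -/
theorem stmt_19 :
    (∀ (c : Fin 6) (s : Unit), exFd (exFd c s) s = exFd c s) ∧
    (∀ (c : Fin 6) (t : Bool), exFu (exFu c t) t = exFu c t) ∧
    (∀ (c : Fin 6) (s : Unit) (t : Bool),
      exFd (exFu (exFd c s) t) s = exFd (exFu c t) s) ∧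
    (∀ (c : Fin 6) (s : Unit) (t : Bool),
      exFu (exFd (exFu c t) s) t = exFu (exFd c s) t) ∧
    (∀ (c : Fin 6) (s u : Unit), exFd (exFd c s) u = exFd (exFd c u) s) ∧
    (∀ (c : Fin 6) (t v : Bool), exFu (exFu c t) v = exFu (exFu c v) t) ∧
    (∀ (c d e : Fin 6) (s : Unit) (t : Bool),
      exFd c s = exFd d s → exFu c t = exFu d t → exFd e s = exFu e t → c = d) ∧
    -- the nontrivial strong link between `c = 0` and `d = 1`,
    -- witnessed by the words `w₁ = su`, `w₂ = st`, with middle element `1 = 4`: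
    (([Sum.inl (), Sum.inr true].foldl exA (0 : Fin 6) = 0) ∧
     ([Sum.inl (), Sum.inr true].foldl exA (4 : Fin 6) = 4) ∧
     ([Sum.inl (), Sum.inr false].foldl exA (4 : Fin 6) = 4) ∧
     ([Sum.inl (), Sum.inr false].foldl exA (1 : Fin 6) = 1) ∧
     ([Sum.inl (), Sum.inr true].foldl exA (0 : Fin 6) =
      [Sum.inl (), Sum.inr true].foldl exA (1 : Fin 6)) ∧
     ([Sum.inl (), Sum.inr false].foldl exA (0 : Fin 6) =
      [Sum.inl (), Sum.inr false].foldl exA (1 : Fin 6)) ∧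
     (0 : Fin 6) ≠ 1) ∧
    ¬ ∃ X : Type, ActEmbeds exA (fullAct (X := X)) := by

  refine ⟨by decide, by decide, by decide, by decide, by decide, by decide, by decide,
    by decide, ?_⟩
  rintro ⟨X, iC, iS, hiC, _, hcomm⟩
  have lift : ∀ (a : Fin 6) (x y : Unit ⊕ Bool),
      iC (exA (exA a x) y) = fullAct (fullAct (iC a) (iS x)) (iS y) := by
    intro a x y; rw [hcomm, hcomm]
  set p := iS (Sum.inl ())
  set q := iS (Sum.inr true)
  set r := iS (Sum.inr false)
  set A := p.1.1 ∩ q.1.1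
  set B := p.1.2 ∩ q.1.1 ∪ q.1.2
  set A' := p.1.1 ∩ r.1.1
  set B' := p.1.2 ∩ r.1.1 ∪ r.1.2
  have g1 : ∀ y : Set X, fullAct (fullAct y p) q = y ∩ A ∪ B := fun y => fullAct_comp p q y
  have g2 : ∀ y : Set X, fullAct (fullAct y p) r = y ∩ A' ∪ B' := fun y => fullAct_comp p r y
  have h1 : iC 0 ∩ A ∪ B = iC 0 := by
    rw [← g1, ← lift]
    norm_num [show exA (exA (0 : Fin 6) (Sum.inl ())) (Sum.inr true) = 0 from by decide]
  have h2 : iC 4 ∩ A ∪ B = iC 4 := by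
    rw [← g1, ← lift]
    norm_num [show exA (exA (4 : Fin 6) (Sum.inl ())) (Sum.inr true) = 4 from by decide]
  have h3 : iC 0 ∩ A ∪ B = iC 1 ∩ A ∪ B := by
    rw [← g1, ← g1, ← lift, ← lift]
    norm_num [show exA (exA (0 : Fin 6) (Sum.inl ())) (Sum.inr true)
      = exA (exA (1 : Fin 6) (Sum.inl ())) (Sum.inr true) from by decide]
  have h4 : iC 4 ∩ A' ∪ B' = iC 4 := by
    rw [← g2, ← lift]
    norm_num [show exA (exA (4 : Fin 6) (Sum.inl ())) (Sum.inr false) = 4 from by decide]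
  have h5 : iC 1 ∩ A' ∪ B' = iC 1 := by
    rw [← g2, ← lift]
    norm_num [show exA (exA (1 : Fin 6) (Sum.inl ())) (Sum.inr false) = 1 from by decide]
  have h6 : iC 0 ∩ A' ∪ B' = iC 1 ∩ A' ∪ B' := by
    rw [← g2, ← g2, ← lift, ← lift]
    norm_num [show exA (exA (0 : Fin 6) (Sum.inl ())) (Sum.inr false)
      = exA (exA (1 : Fin 6) (Sum.inl ())) (Sum.inr false) from by decide]
  have : (0 : Fin 6) = 1 := hiC (chase A B A' B' (iC 0) (iC 1) (iC 4) h1 h2 h3 h4 h5 h6)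
  exact absurd this (by decide)
end
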